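/- Let μ be a probability measure on ℂ with finite 1-energy, let X_1, X_2, … be i.i.d. with law μ, and let V_{μ,n}(z) := (1/n) Σ_{j=1}^n 1/(z − X_j). Then |V_{μ,n}(X_{n+1}) − V_μ(X_{n+1})| → 0 in probability as n → ∞, where V_μ(z) = ∫ 1/(z−w) dμ(w). -/

import Mathlib

open MeasureTheory ProbabilityTheory Filter

set_option linter.unusedSectionVars false

section EmpiricalPotentialAux

variable {Ω : Type*} [MeasureSpace Ω] [IsProbabilityMeasure (ℙ : Measure Ω)]
  (X : ℕ → Ω → ℂ) (μ : Measure ℂ) [IsProbabilityMeasure μ]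

private lemma sum_icc_eq_sum_fin (n : ℕ) (h : ℕ → ℂ) :
    ∑ j ∈ Finset.Icc 1 n, h j = ∑ i : Fin n, h (i.1 + 1) := by
  rw [Fin.sum_univ_eq_sum_range (fun i => h (i + 1)), ← Finset.Ico_add_one_right_eq_Icc,
    Finset.sum_Ico_eq_sum_range]
  simp [add_comm]

private lemma kernel_meas : Measurable fun p : ℂ × ℂ => (p.1 - p.2)⁻¹ :=
  (measurable_fst.sub measurable_snd).inv

private lemma V_meas : Measurable fun z : ℂ => ∫ w, (z - w)⁻¹ ∂μ :=
  ((kernel_meas).stronglyMeasurable.integral_prod_right').measurable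

/-- L¹ weak law of large numbers for the empirical potential at a fixed point `z`. -/
private lemma wlln_aux (hX : ∀ i, Measurable (X i))
    (hindep : iIndepFun X ℙ)
    (hlaw : ∀ i, Measure.map (X i) ℙ = μ) (z : ℂ)
    (hz : ∫⁻ w, (‖(z - w)⁻¹‖₊ : ENNReal) ∂μ < ⊤) :
    Tendsto (fun n : ℕ => ∫⁻ ω, (‖(1 / n : ℂ) * ∑ j ∈ Finset.Icc 1 n, (z - X j ω)⁻¹
      - ∫ w, (z - w)⁻¹ ∂μ‖₊ : ENNReal) ∂ℙ) atTop (nhds 0) := by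
  have hφ : Measurable fun w : ℂ => (z - w)⁻¹ := (measurable_const.sub measurable_id).inv
  set Y : ℕ → Ω → ℂ := fun i ω => (z - X (i + 1) ω)⁻¹ with hY
  have hYm : ∀ i, Measurable (Y i) := fun i => hφ.comp (hX (i + 1))
  have hlY : ∀ i, ∫⁻ ω, (‖Y i ω‖₊ : ENNReal) ∂ℙ = ∫⁻ w, (‖(z - w)⁻¹‖₊ : ENNReal) ∂μ := by
    intro i
    rw [← hlaw (i + 1), lintegral_map hφ.nnnorm.coe_nnreal_ennreal (hX (i + 1))]
  have hmem : MemLp (Y 0) 1 ℙ := by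
    refine ⟨(hYm 0).aestronglyMeasurable, ?_⟩
    rw [eLpNorm_one_eq_lintegral_enorm]; exact (hlY 0).trans_lt hz
  have hpind : Pairwise (Function.onFun (IndepFun · · ℙ) Y) := fun i j hij =>
    (hindep.indepFun (by omega : i + 1 ≠ j + 1)).comp hφ hφ
  have hident : ∀ i, IdentDistrib (Y i) (Y 0) ℙ ℙ := fun i =>
    (⟨(hX (i + 1)).aemeasurable, (hX 1).aemeasurable, by rw [hlaw, hlaw]⟩ :
      IdentDistrib (X (i + 1)) (X 1) ℙ ℙ).comp hφ
  have h := strong_law_Lp (le_refl 1) ENNReal.one_ne_top Y hmem hpind hident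
  have hmean : (ℙ)[Y 0] = ∫ w, (z - w)⁻¹ ∂μ := by
    rw [← hlaw 1, integral_map (hX 1).aemeasurable hφ.aestronglyMeasurable]
  refine h.congr fun n => ?_
  rw [eLpNorm_one_eq_lintegral_enorm]
  simp only [enorm_eq_nnnorm]
  refine lintegral_congr fun ω => ?_
  congr 2
  rw [hmean.symm]
  congr 1
  rw [sum_icc_eq_sum_fin n (fun j => (z - X j ω)⁻¹),
    Fin.sum_univ_eq_sum_range (fun i => (z - X (i + 1) ω)⁻¹), Complex.real_smul]
  push_cast
  rw [one_div]

/-- Domination: the expected deviation is at most twice the 1-energy integral at `z`. -/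
private lemma dom_aux (hX : ∀ i, Measurable (X i))
    (hlaw : ∀ i, Measure.map (X i) ℙ = μ) (n : ℕ) (z : ℂ) :
    ∫⁻ ω, (‖(1 / n : ℂ) * ∑ j ∈ Finset.Icc 1 n, (z - X j ω)⁻¹
      - ∫ w, (z - w)⁻¹ ∂μ‖₊ : ENNReal) ∂ℙ
      ≤ 2 * ∫⁻ w, (‖(z - w)⁻¹‖₊ : ENNReal) ∂μ := by
  have hφ : Measurable fun w : ℂ => (z - w)⁻¹ := (measurable_const.sub measurable_id).inv
  set I := ∫⁻ w, (‖(z - w)⁻¹‖₊ : ENNReal) ∂μ with hI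
  have hlY : ∀ i, ∫⁻ ω, (‖(z - X i ω)⁻¹‖₊ : ENNReal) ∂ℙ = I := by
    intro i
    rw [hI, ← hlaw i, lintegral_map hφ.nnnorm.coe_nnreal_ennreal (hX i)]
  have hVle : (‖∫ w, (z - w)⁻¹ ∂μ‖₊ : ENNReal) ≤ I :=
    enorm_integral_le_lintegral_enorm _
  have hninv : (‖(1 / n : ℂ)‖₊ : ENNReal) ≤ ((n : ENNReal))⁻¹ := by
    rcases Nat.eq_zero_or_pos n with h | h
    · subst h; simp
    · rw [one_div, nnnorm_inv]
      have : (‖(n : ℂ)‖₊ : ENNReal) = (n : ENNReal) := by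
        simp
      rw [ENNReal.coe_inv (by simp [h.ne'] : (‖(n : ℂ)‖₊ : NNReal) ≠ 0), this]
  calc
    ∫⁻ ω, (‖(1 / n : ℂ) * ∑ j ∈ Finset.Icc 1 n, (z - X j ω)⁻¹
        - ∫ w, (z - w)⁻¹ ∂μ‖₊ : ENNReal) ∂ℙ
      ≤ ∫⁻ ω, ((‖(1 / n : ℂ) * ∑ j ∈ Finset.Icc 1 n, (z - X j ω)⁻¹‖₊ : ENNReal)
          + (‖∫ w, (z - w)⁻¹ ∂μ‖₊ : ENNReal)) ∂ℙ := by
        refine lintegral_mono fun ω => ?_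
        exact ENNReal.coe_le_coe.2 (nnnorm_sub_le _ _)
    _ = (∫⁻ ω, (‖(1 / n : ℂ) * ∑ j ∈ Finset.Icc 1 n, (z - X j ω)⁻¹‖₊ : ENNReal) ∂ℙ)
          + (‖∫ w, (z - w)⁻¹ ∂μ‖₊ : ENNReal) := by
        rw [lintegral_add_right _ measurable_const, lintegral_const, measure_univ, mul_one]
    _ ≤ (∫⁻ ω, ((n : ENNReal))⁻¹ * ∑ j ∈ Finset.Icc 1 n,
          (‖(z - X j ω)⁻¹‖₊ : ENNReal) ∂ℙ) + I := by
        gcongr with ω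
        rw [nnnorm_mul, ENNReal.coe_mul]
        refine mul_le_mul' hninv ?_
        calc (‖∑ j ∈ Finset.Icc 1 n, (z - X j ω)⁻¹‖₊ : ENNReal)
            ≤ ((∑ j ∈ Finset.Icc 1 n, ‖(z - X j ω)⁻¹‖₊ : NNReal) : ENNReal) := by
              exact_mod_cast nnnorm_sum_le _ _
          _ = ∑ j ∈ Finset.Icc 1 n, (‖(z - X j ω)⁻¹‖₊ : ENNReal) := by
              push_cast; rfl
    _ = (n : ENNReal)⁻¹ * (∑ j ∈ Finset.Icc 1 n,
          ∫⁻ ω, (‖(z - X j ω)⁻¹‖₊ : ENNReal) ∂ℙ) + I := by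
        have hm : ∀ j : ℕ, Measurable fun ω => (‖(z - X j ω)⁻¹‖₊ : ENNReal) :=
          fun j => (hφ.comp (hX j)).nnnorm.coe_nnreal_ennreal
        rw [lintegral_const_mul _ (Finset.measurable_sum _ fun j _ => hm j),
          lintegral_finset_sum _ fun j _ => hm j]
    _ = (n : ENNReal)⁻¹ * ((n : ENNReal) * I) + I := by
        rw [Finset.sum_congr rfl fun j _ => hlY j, Finset.sum_const, Nat.card_Icc]
        simp [nsmul_eq_mul]
    _ ≤ I + I := by
        refine add_le_add_left ?_ I
        rw [← mul_assoc]
        rcases Nat.eq_zero_or_pos n with h | h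
        · subst h; simp
        · rw [ENNReal.inv_mul_cancel (by exact_mod_cast h.ne') (by simp), one_mul]
    _ = 2 * I := (two_mul I).symm

/-- Disintegration over the independent variable `X (n+1)`. -/
private lemma fubini_aux (hX : ∀ i, Measurable (X i))
    (hindep : iIndepFun X ℙ)
    (hlaw : ∀ i, Measure.map (X i) ℙ = μ) (n : ℕ) :
    ∫⁻ ω, (‖(1 / n : ℂ) * ∑ j ∈ Finset.Icc 1 n, (X (n + 1) ω - X j ω)⁻¹
        - ∫ w, (X (n + 1) ω - w)⁻¹ ∂μ‖₊ : ENNReal) ∂ℙ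
      = ∫⁻ z, ∫⁻ ω, (‖(1 / n : ℂ) * ∑ j ∈ Finset.Icc 1 n, (z - X j ω)⁻¹
        - ∫ w, (z - w)⁻¹ ∂μ‖₊ : ENNReal) ∂ℙ ∂μ := by
  classical
  set V : ℂ → ℂ := fun z => ∫ w, (z - w)⁻¹ ∂μ with hVdef
  have hVm : Measurable V := V_meas μ
  set Vec : Ω → (Fin n → ℂ) := fun ω i => X (i.1 + 1) ω with hVecdef
  have hVecm : Measurable Vec := measurable_pi_lambda _ fun i => hX _
  have hind : IndepFun (X (n + 1)) Vec ℙ := by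
    have hd : Disjoint ({n + 1} : Finset ℕ) (Finset.Icc 1 n) := by
      simp [Finset.disjoint_singleton_left, Finset.mem_Icc]
    have h := hindep.indepFun_finset {n + 1} (Finset.Icc 1 n) hd hX
    have hmem1 : (n + 1) ∈ ({n + 1} : Finset ℕ) := Finset.mem_singleton_self _
    have hmem2 : ∀ i : Fin n, (i.1 + 1) ∈ Finset.Icc 1 n := fun i => by
      simp [Finset.mem_Icc]
    have := h.comp
      (φ := fun v : (i : ({n + 1} : Finset ℕ)) → ℂ => v ⟨n + 1, hmem1⟩)
      (ψ := fun v : (i : (Finset.Icc 1 n : Finset ℕ)) → ℂ =>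
        fun i : Fin n => v ⟨i.1 + 1, hmem2 i⟩)
      (_mγ := inferInstance) (_mγ' := inferInstance)
      (measurable_pi_apply _)
      (measurable_pi_lambda _ fun i => measurable_pi_apply _)
    exact this
  have hmap : Measure.map (fun ω => (X (n + 1) ω, Vec ω)) ℙ
      = μ.prod (Measure.map Vec ℙ) := by
    rw [← hlaw (n + 1)]
    exact (indepFun_iff_map_prod_eq_prod_map_map
      (hX (n + 1)).aemeasurable hVecm.aemeasurable).1 hind
  haveI : IsProbabilityMeasure (Measure.map Vec ℙ) :=
    Measure.isProbabilityMeasure_map hVecm.aemeasurable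
  set G : ℂ × (Fin n → ℂ) → ENNReal :=
    fun p => (‖(1 / n : ℂ) * ∑ i : Fin n, (p.1 - p.2 i)⁻¹ - V p.1‖₊ : ENNReal) with hGdef
  have hGm : Measurable G := by
    refine Measurable.coe_nnreal_ennreal (Measurable.nnnorm ?_)
    exact (measurable_const.mul (Finset.measurable_sum _ fun i _ =>
      (measurable_fst.sub ((measurable_pi_apply i).comp measurable_snd)).inv)).sub
      (hVm.comp measurable_fst)
  have hsum : ∀ (c : ℂ) (ω : Ω),
      ∑ j ∈ Finset.Icc 1 n, (c - X j ω)⁻¹ = ∑ i : Fin n, (c - Vec ω i)⁻¹ :=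
    fun c ω => sum_icc_eq_sum_fin n (fun j => (c - X j ω)⁻¹)
  calc
    ∫⁻ ω, (‖(1 / n : ℂ) * ∑ j ∈ Finset.Icc 1 n, (X (n + 1) ω - X j ω)⁻¹
        - V (X (n + 1) ω)‖₊ : ENNReal) ∂ℙ
      = ∫⁻ ω, G (X (n + 1) ω, Vec ω) ∂ℙ := by
        refine lintegral_congr fun ω => ?_
        simp only [hGdef, hsum]
    _ = ∫⁻ p, G p ∂(Measure.map (fun ω => (X (n + 1) ω, Vec ω)) ℙ) :=
        (lintegral_map hGm ((hX (n + 1)).prodMk hVecm)).symm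
    _ = ∫⁻ p, G p ∂(μ.prod (Measure.map Vec ℙ)) := by rw [hmap]
    _ = ∫⁻ z, ∫⁻ v, G (z, v) ∂(Measure.map Vec ℙ) ∂μ := lintegral_prod _ hGm.aemeasurable
    _ = ∫⁻ z, ∫⁻ ω, G (z, Vec ω) ∂ℙ ∂μ := by
        refine lintegral_congr fun z => ?_
        exact lintegral_map (hGm.comp measurable_prodMk_left) hVecm
    _ = ∫⁻ z, ∫⁻ ω, (‖(1 / n : ℂ) * ∑ j ∈ Finset.Icc 1 n, (z - X j ω)⁻¹
        - V z‖₊ : ENNReal) ∂ℙ ∂μ := by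
        refine lintegral_congr fun z => lintegral_congr fun ω => ?_
        simp only [hGdef, hsum]

end EmpiricalPotentialAux

/-- For `μ` of finite 1-energy and `X_i` i.i.d. with law `μ`,
`|V_{μ,n}(X_{n+1}) − V_μ(X_{n+1})| → 0` in probability, where
`V_{μ,n}(z) = (1/n) Σ_{j=1}^n (z − X_j)⁻¹` and `V_μ(z) = ∫ (z−w)⁻¹ dμ(w)`. -/
theorem empirical_potential_tendsto_potential
    {Ω : Type*} [MeasureSpace Ω] [IsProbabilityMeasure (ℙ : Measure Ω)]
    (X : ℕ → Ω → ℂ) (hX : ∀ i, Measurable (X i))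
    (hindep : iIndepFun X ℙ)
    (μ : Measure ℂ) [IsProbabilityMeasure μ] (hlaw : ∀ i, Measure.map (X i) ℙ = μ)
    (henergy : ∫⁻ z, ∫⁻ w, ENNReal.ofReal (1 / ‖z - w‖) ∂μ ∂μ < ⊤) :
    ∀ ε > (0 : ℝ),
      Tendsto (fun n : ℕ =>
          (ℙ {ω | ε ≤ ‖(1 / n : ℂ) * ∑ j ∈ Finset.Icc 1 n, (X (n + 1) ω - X j ω)⁻¹
                    - ∫ w, (X (n + 1) ω - w)⁻¹ ∂μ‖}).toReal)
        atTop (nhds 0) := by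
  intro ε hε
  set D : ℕ → Ω → ℂ := fun n ω =>
    (1 / n : ℂ) * ∑ j ∈ Finset.Icc 1 n, (X (n + 1) ω - X j ω)⁻¹
      - ∫ w, (X (n + 1) ω - w)⁻¹ ∂μ with hDdef
  have hDm : ∀ n, Measurable (D n) := fun n =>
    (measurable_const.mul (Finset.measurable_sum _ fun j _ =>
      ((hX (n + 1)).sub (hX j)).inv)).sub ((V_meas μ).comp (hX (n + 1)))
  set J : ℕ → ENNReal := fun n => ∫⁻ ω, (‖D n ω‖₊ : ENNReal) ∂ℙ with hJdef
  -- rewrite the energy hypothesis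
  have hker : ∀ z w : ℂ, (‖(z - w)⁻¹‖₊ : ENNReal) = ENNReal.ofReal (1 / ‖z - w‖) := by
    intro z w
    rw [← enorm_eq_nnnorm, ← ofReal_norm, norm_inv, one_div]
  have hImeas : Measurable fun z : ℂ => ∫⁻ w, (‖(z - w)⁻¹‖₊ : ENNReal) ∂μ :=
    Measurable.lintegral_prod_right' ((kernel_meas).enorm)
  have hIen : ∫⁻ z, ∫⁻ w, (‖(z - w)⁻¹‖₊ : ENNReal) ∂μ ∂μ < ⊤ := by
    have : (fun z : ℂ => ∫⁻ w, (‖(z - w)⁻¹‖₊ : ENNReal) ∂μ)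
        = fun z => ∫⁻ w, ENNReal.ofReal (1 / ‖z - w‖) ∂μ := by
      funext z; exact lintegral_congr fun w => hker z w
    rw [this]; exact henergy
  have hae : ∀ᵐ z ∂μ, ∫⁻ w, (‖(z - w)⁻¹‖₊ : ENNReal) ∂μ < ⊤ :=
    ae_lt_top hImeas hIen.ne
  -- the expected deviation, disintegrated
  have hJ : ∀ n, J n = ∫⁻ z, ∫⁻ ω, (‖(1 / n : ℂ) * ∑ j ∈ Finset.Icc 1 n, (z - X j ω)⁻¹
      - ∫ w, (z - w)⁻¹ ∂μ‖₊ : ENNReal) ∂ℙ ∂μ := fun n =>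
    fubini_aux X μ hX hindep hlaw n
  -- measurability of the inner expectation in z
  have hf_meas : ∀ n : ℕ, Measurable fun z : ℂ =>
      ∫⁻ ω, (‖(1 / n : ℂ) * ∑ j ∈ Finset.Icc 1 n, (z - X j ω)⁻¹
        - ∫ w, (z - w)⁻¹ ∂μ‖₊ : ENNReal) ∂ℙ := by
    intro n
    apply Measurable.lintegral_prod_right'
      (f := fun p : ℂ × Ω => (‖(1 / n : ℂ) * ∑ j ∈ Finset.Icc 1 n, (p.1 - X j p.2)⁻¹
        - ∫ w, (p.1 - w)⁻¹ ∂μ‖₊ : ENNReal))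
    exact ((measurable_const.mul (Finset.measurable_sum _ fun j _ =>
      (measurable_fst.sub ((hX j).comp measurable_snd)).inv)).sub
      ((V_meas μ).comp measurable_fst)).enorm
  -- dominated convergence: J n → 0
  have hJ0 : Tendsto J atTop (nhds 0) := by
    have h := tendsto_lintegral_of_dominated_convergence
      (μ := μ)
      (F := fun n z => ∫⁻ ω, (‖(1 / n : ℂ) * ∑ j ∈ Finset.Icc 1 n, (z - X j ω)⁻¹
        - ∫ w, (z - w)⁻¹ ∂μ‖₊ : ENNReal) ∂ℙ)
      (f := fun _ => 0)
      (bound := fun z => 2 * ∫⁻ w, (‖(z - w)⁻¹‖₊ : ENNReal) ∂μ)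
      hf_meas
      (fun n => Filter.Eventually.of_forall fun z => dom_aux X μ hX hlaw n z)
      (by
        rw [lintegral_const_mul _ hImeas]
        exact ENNReal.mul_ne_top (by simp) hIen.ne)
      (by
        filter_upwards [hae] with z hz
        exact wlln_aux X μ hX hindep hlaw z hz)
    rw [lintegral_zero] at h
    exact h.congr fun n => (hJ n).symm
  -- Markov inequality
  have hεne : ENNReal.ofReal ε ≠ 0 := (ENNReal.ofReal_pos.2 hε).ne'
  have hset : ∀ n, {ω | ε ≤ ‖D n ω‖}
      = {ω | ENNReal.ofReal ε ≤ (‖D n ω‖₊ : ENNReal)} := by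
    intro n
    ext ω
    simp only [Set.mem_setOf_eq, ← enorm_eq_nnnorm, ← ofReal_norm]
    exact (ENNReal.ofReal_le_ofReal_iff (norm_nonneg _)).symm
  have hmark : ∀ n, ℙ {ω | ε ≤ ‖D n ω‖} ≤ (ENNReal.ofReal ε)⁻¹ * J n := by
    intro n
    calc ℙ {ω | ε ≤ ‖D n ω‖}
        = (ENNReal.ofReal ε)⁻¹ * (ENNReal.ofReal ε * ℙ {ω | ε ≤ ‖D n ω‖}) := by
          rw [← mul_assoc, ENNReal.inv_mul_cancel hεne ENNReal.ofReal_ne_top, one_mul]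
      _ ≤ (ENNReal.ofReal ε)⁻¹ * J n := by
          refine mul_le_mul_right ?_ _
          rw [hset n]
          exact mul_meas_ge_le_lintegral₀ ((hDm n).enorm.aemeasurable) _
  have hupper : Tendsto (fun n => (ENNReal.ofReal ε)⁻¹ * J n) atTop (nhds 0) := by
    have := ENNReal.Tendsto.const_mul (a := (ENNReal.ofReal ε)⁻¹) hJ0
      (Or.inr (by simpa using hε))
    simpa using this
  have hP : Tendsto (fun n => ℙ {ω | ε ≤ ‖D n ω‖}) atTop (nhds 0) :=
    tendsto_of_tendsto_of_tendsto_of_le_of_le tendsto_const_nhds hupper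
      (fun n => zero_le) hmark
  have h2 : Tendsto (fun n => (ℙ {ω | ε ≤ ‖D n ω‖}).toReal) atTop (nhds 0) := by
    simpa only [Function.comp_def, ENNReal.toReal_zero] using
      (ENNReal.tendsto_toReal (a := 0) (by simp)).comp hP
  exact h2
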